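/- Let p be a prime, e ≥ 1 an integer, d = p^e, and let a, b, c₀ ∈ ℂ_p with |a|_p = |b|_p > 0. Define f(z) = z^d + c₀. If |f(a) − f(b)|_p ≥ |p|_p^{p/(p−1)} · |b|_p^d, then |f(a) − f(b)|_p = |a − b|_p^d. -/

import Mathlib

open IsUltrametricDist Finset in
lemma aux_expand {𝕜 : Type*} [NormedField 𝕜] (p : ℕ) (a b : 𝕜) (hp : 1 ≤ p) :
    a ^ p - b ^ p - (a - b) ^ p
      = ∑ k ∈ Finset.Ioo 0 p, b ^ k * (a - b) ^ (p - k) * (p.choose k) := by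
  have h := add_pow b (a - b) p
  rw [add_sub_cancel] at h
  rw [h, Finset.sum_range_succ]
  rw [Finset.range_eq_Ico, Finset.sum_eq_sum_Ico_succ_bot hp]
  have : Finset.Ico 1 p = Finset.Ioo 0 p := rfl
  rw [this]
  simp

lemma aux_key (p : ℕ) (hp : p.Prime) {𝕜 : Type*} [NormedField 𝕜] [IsUltrametricDist 𝕜]
    (hpnorm : ‖(p : 𝕜)‖ = (p : ℝ)⁻¹) (a b : 𝕜) (hab : ‖a‖ = ‖b‖) (hbpos : 0 < ‖b‖)
    (hbig : ‖a ^ p - b ^ p‖ ≥ ‖(p : 𝕜)‖ ^ ((p : ℝ) / ((p : ℝ) - 1)) * ‖b‖ ^ p) :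
    ‖a ^ p - b ^ p‖ = ‖a - b‖ ^ p := by
  have hp2 : 2 ≤ p := hp.two_le
  have hp1R : (1 : ℝ) < (p : ℝ) := by exact_mod_cast hp.one_lt
  have hpd : (p : ℝ) - 1 ≠ 0 := by linarith
  have hq : (0 : ℝ) < (p : ℝ)⁻¹ := by positivity
  set s : ℝ := (p : ℝ)⁻¹ ^ ((1 : ℝ) / ((p : ℝ) - 1)) with hs_def
  have hs_pos : 0 < s := Real.rpow_pos_of_pos hq _
  have hs1 : s ^ (p - 1) = (p : ℝ)⁻¹ := by
    rw [hs_def, ← Real.rpow_natCast _ (p - 1), ← Real.rpow_mul hq.le]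
    rw [Nat.cast_sub (by omega), Nat.cast_one, one_div_mul_cancel hpd, Real.rpow_one]
  have hsp : s ^ p = (p : ℝ)⁻¹ ^ ((p : ℝ) / ((p : ℝ) - 1)) := by
    rw [hs_def, ← Real.rpow_natCast _ p, ← Real.rpow_mul hq.le]
    rw [show (1 : ℝ) / ((p : ℝ) - 1) * (p : ℕ) = (p : ℝ) / ((p : ℝ) - 1) by ring]
  set r := ‖b‖ with hr
  set t := ‖a - b‖ with ht
  have htr : t ≤ r := by
    rw [ht, hr, sub_eq_add_neg]
    simpa [hab, hr] using IsUltrametricDist.norm_add_le_max a (-b)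
  have ht0 : 0 ≤ t := norm_nonneg _
  -- the error term bound
  have hE : ‖a ^ p - b ^ p - (a - b) ^ p‖ ≤ (s * r) ^ (p - 1) * t := by
    rw [aux_expand p a b (by omega)]
    apply IsUltrametricDist.norm_sum_le_of_forall_le_of_nonneg (by positivity)
    intro k hk
    simp only [Finset.mem_Ioo] at hk
    have hchoose : ‖((p.choose k : ℕ) : 𝕜)‖ ≤ (p : ℝ)⁻¹ := by
      obtain ⟨m, hm⟩ := hp.dvd_choose_self (by omega) hk.2
      rw [hm]
      push_cast
      rw [norm_mul, hpnorm]
      calc (p : ℝ)⁻¹ * ‖(m : 𝕜)‖ ≤ (p : ℝ)⁻¹ * 1 := by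
            gcongr; exact IsUltrametricDist.norm_natCast_le_one 𝕜 m
        _ = (p : ℝ)⁻¹ := mul_one _
    rw [norm_mul, norm_mul, norm_pow, norm_pow]
    have hsplit : r ^ k * t ^ (p - k) ≤ r ^ (p - 1) * t := by
      have h1 : t ^ (p - k) = t ^ (p - k - 1) * t := by
        rw [← pow_succ]
        congr 1
        omega
      rw [h1, ← mul_assoc]
      have h2 : r ^ k * t ^ (p - k - 1) ≤ r ^ (p - 1) := by
        calc r ^ k * t ^ (p - k - 1) ≤ r ^ k * r ^ (p - k - 1) := by
              gcongr
          _ = r ^ (p - 1) := by rw [← pow_add]; congr 1; omega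
      gcongr
    calc r ^ k * t ^ (p - k) * ‖((p.choose k : ℕ) : 𝕜)‖
        ≤ r ^ (p - 1) * t * (p : ℝ)⁻¹ :=
          mul_le_mul hsplit hchoose (norm_nonneg _) (by positivity)
      _ = (s * r) ^ (p - 1) * t := by
          rw [mul_pow, hs1]; ring
  have hsum : a ^ p - b ^ p = (a - b) ^ p + (a ^ p - b ^ p - (a - b) ^ p) := by ring
  rcases lt_or_ge (s * r) t with hcase | hcase
  · -- |a-b| large: dominant term (a-b)^p
    have hstrict : ‖a ^ p - b ^ p - (a - b) ^ p‖ < ‖(a - b) ^ p‖ := by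
      rw [norm_pow, ← ht]
      have ht_pos : 0 < t := lt_of_le_of_lt (by positivity) hcase
      calc ‖a ^ p - b ^ p - (a - b) ^ p‖ ≤ (s * r) ^ (p - 1) * t := hE
        _ < t ^ (p - 1) * t :=
            mul_lt_mul_of_pos_right
              (pow_lt_pow_left₀ hcase (by positivity) (by omega)) ht_pos
        _ = t ^ p := by rw [← pow_succ]; congr 1; omega
    rw [hsum, IsUltrametricDist.norm_add_eq_max_of_norm_ne_norm (ne_of_gt hstrict),
      max_eq_left hstrict.le, norm_pow]
  · -- |a-b| small: boundary case
    have hM : ‖(p : 𝕜)‖ ^ ((p : ℝ) / ((p : ℝ) - 1)) * ‖b‖ ^ p = (s * r) ^ p := by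
      rw [hpnorm, mul_pow, hsp]
    have hteq : t = s * r := by
      refine le_antisymm hcase ?_
      by_contra hlt
      push_neg at hlt
      have hub : ‖a ^ p - b ^ p‖ < (s * r) ^ p := by
        rw [hsum]
        calc ‖(a - b) ^ p + (a ^ p - b ^ p - (a - b) ^ p)‖
            ≤ max ‖(a - b) ^ p‖ ‖a ^ p - b ^ p - (a - b) ^ p‖ :=
              IsUltrametricDist.norm_add_le_max _ _
          _ < (s * r) ^ p := by
              apply max_lt
              · rw [norm_pow, ← ht]
                exact pow_lt_pow_left₀ hlt ht0 (by omega)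
              · calc ‖a ^ p - b ^ p - (a - b) ^ p‖ ≤ (s * r) ^ (p - 1) * t := hE
                  _ < (s * r) ^ (p - 1) * (s * r) :=
                      mul_lt_mul_of_pos_left hlt (by positivity)
                  _ = (s * r) ^ p := by rw [← pow_succ]; congr 1; omega
      rw [hM] at hbig
      exact absurd hbig (not_le.mpr hub)
    have hub : ‖a ^ p - b ^ p‖ ≤ (s * r) ^ p := by
      rw [hsum]
      calc ‖(a - b) ^ p + (a ^ p - b ^ p - (a - b) ^ p)‖
          ≤ max ‖(a - b) ^ p‖ ‖a ^ p - b ^ p - (a - b) ^ p‖ :=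
            IsUltrametricDist.norm_add_le_max _ _
        _ ≤ (s * r) ^ p := by
            apply max_le
            · rw [norm_pow, ← ht, hteq]
            · calc ‖a ^ p - b ^ p - (a - b) ^ p‖ ≤ (s * r) ^ (p - 1) * t := hE
                _ ≤ (s * r) ^ (p - 1) * (s * r) := by gcongr
                _ = (s * r) ^ p := by rw [← pow_succ]; congr 1; omega
    rw [hM] at hbig
    rw [hteq]
    exact le_antisymm hub hbig

theorem stmt2 (p e : ℕ) (hp : p.Prime) (he : 1 ≤ e) (d : ℕ) (hd : d = p ^ e)
    (𝕜 : Type*) [NormedField 𝕜] [IsUltrametricDist 𝕜]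
    (hpnorm : ‖(p : 𝕜)‖ = (p : ℝ)⁻¹)
    (a b c₀ : 𝕜) (f : 𝕜 → 𝕜) (hf : ∀ z, f z = z ^ d + c₀)
    (hab : ‖a‖ = ‖b‖) (hbpos : 0 < ‖b‖)
    (hbig : ‖f a - f b‖ ≥ ‖(p : 𝕜)‖ ^ ((p : ℝ) / ((p : ℝ) - 1)) * ‖b‖ ^ d) :
    ‖f a - f b‖ = ‖a - b‖ ^ d := by
  have hfab : f a - f b = a ^ d - b ^ d := by rw [hf, hf]; ring
  rw [hfab] at hbig ⊢
  subst hd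
  clear hf hfab
  -- general real facts
  have hp1R : (1 : ℝ) < (p : ℝ) := by exact_mod_cast hp.one_lt
  have hpd : (p : ℝ) - 1 ≠ 0 := by linarith
  have hq : (0 : ℝ) < (p : ℝ)⁻¹ := by positivity
  set s : ℝ := (p : ℝ)⁻¹ ^ ((1 : ℝ) / ((p : ℝ) - 1)) with hs_def
  have hs_pos : 0 < s := Real.rpow_pos_of_pos hq _
  have hs_le1 : s ≤ 1 := by
    apply Real.rpow_le_one hq.le
    · rw [inv_le_one_iff₀]; right; linarith
    · exact div_nonneg zero_le_one (by linarith)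
  have hsp : s ^ p = (p : ℝ)⁻¹ ^ ((p : ℝ) / ((p : ℝ) - 1)) := by
    rw [hs_def, ← Real.rpow_natCast _ p, ← Real.rpow_mul hq.le]
    rw [show (1 : ℝ) / ((p : ℝ) - 1) * (p : ℕ) = (p : ℝ) / ((p : ℝ) - 1) by ring]
  induction e, he using Nat.le_induction with
  | base =>
    rw [pow_one] at hbig ⊢
    exact aux_key p hp hpnorm a b hab hbpos hbig
  | succ e he ih =>
    have hpow : ∀ x : 𝕜, x ^ p ^ (e + 1) = (x ^ p ^ e) ^ p := by
      intro x
      rw [← pow_mul, pow_succ]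
    have hAB : ‖a ^ p ^ e‖ = ‖b ^ p ^ e‖ := by rw [norm_pow, norm_pow, hab]
    have hBpos : 0 < ‖b ^ p ^ e‖ := by rw [norm_pow]; positivity
    have hbig' : ‖(a ^ p ^ e) ^ p - (b ^ p ^ e) ^ p‖
        ≥ ‖(p : 𝕜)‖ ^ ((p : ℝ) / ((p : ℝ) - 1)) * ‖b ^ p ^ e‖ ^ p := by
      have h := hbig
      rw [hpow a, hpow b] at h
      calc ‖(p : 𝕜)‖ ^ ((p : ℝ) / ((p : ℝ) - 1)) * ‖b ^ p ^ e‖ ^ p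
          = ‖(p : 𝕜)‖ ^ ((p : ℝ) / ((p : ℝ) - 1)) * ‖b‖ ^ p ^ (e + 1) := by
            rw [norm_pow, ← pow_mul, ← pow_succ]
        _ ≤ ‖(a ^ p ^ e) ^ p - (b ^ p ^ e) ^ p‖ := h
    have hkey := aux_key p hp hpnorm (a ^ p ^ e) (b ^ p ^ e) hAB hBpos hbig'
    -- lower bound for the inner difference, to apply ih
    have hlow : ‖a ^ p ^ e - b ^ p ^ e‖ ≥ s * ‖b‖ ^ p ^ e := by
      have h1 : (s * ‖b‖ ^ p ^ e) ^ p ≤ ‖a ^ p ^ e - b ^ p ^ e‖ ^ p := by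
        rw [← hkey]
        calc (s * ‖b‖ ^ p ^ e) ^ p = s ^ p * (‖b‖ ^ p ^ e) ^ p := mul_pow _ _ _
          _ = ‖(p : 𝕜)‖ ^ ((p : ℝ) / ((p : ℝ) - 1)) * ‖b ^ p ^ e‖ ^ p := by
              rw [hsp, hpnorm, norm_pow]
          _ ≤ ‖(a ^ p ^ e) ^ p - (b ^ p ^ e) ^ p‖ := hbig'
      exact le_of_pow_le_pow_left₀ hp.pos.ne' (norm_nonneg _) h1
    have hbig'' : ‖a ^ p ^ e - b ^ p ^ e‖
        ≥ ‖(p : 𝕜)‖ ^ ((p : ℝ) / ((p : ℝ) - 1)) * ‖b‖ ^ p ^ e := by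
      calc ‖(p : 𝕜)‖ ^ ((p : ℝ) / ((p : ℝ) - 1)) * ‖b‖ ^ p ^ e
          = s ^ p * ‖b‖ ^ p ^ e := by rw [hsp, hpnorm]
        _ ≤ s * ‖b‖ ^ p ^ e := by
            gcongr
            calc s ^ p ≤ s ^ 1 := pow_le_pow_of_le_one hs_pos.le hs_le1 hp.one_lt.le
              _ = s := pow_one s
        _ ≤ ‖a ^ p ^ e - b ^ p ^ e‖ := hlow
    have hih := ih hbig''
    rw [hpow a, hpow b, hkey, hih, ← pow_mul, ← pow_succ]
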